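/- Take the defining function H(x₂,x₃,x₄) = x₃² (the homogeneous Siklos metric with ε = 1, k = 1). For every ρ > 0, the immersion F(u₁,u₂,u₃) = (u₁, u₃, ρe^{−u₃}, −u₂e^{−u₃}), defined on V = ℝ³ with unit normal ξ(u) = (ρ²e^{−2u₃}/β, 0, ρe^{−u₃}/β, 0), is a parallel hypersurface of the Siklos metric (∇h ≡ 0) which is not totally geodesic (h ≢ 0). -/

import Mathlib

open scoped BigOperators

/-- Partial derivative of `f : ℝⁿ → ℝ` in the `i`-th coordinate direction. -/
noncomputable def pd {n : ℕ} (i : Fin n) (f : (Fin n → ℝ) → ℝ) (x : Fin n → ℝ) : ℝ :=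
  deriv (fun t => f (Function.update x i t)) (x i)

/-- Christoffel symbols `Γᵏᵢⱼ` of a metric field `g`. -/
noncomputable def christoffel {n : ℕ} (g : (Fin n → ℝ) → Matrix (Fin n) (Fin n) ℝ)
    (x : Fin n → ℝ) (k i j : Fin n) : ℝ :=
  (1 / 2) * ∑ l, (g x)⁻¹ k l *
    (pd i (fun y => g y l j) x + pd j (fun y => g y l i) x - pd l (fun y => g y i j) x)

/-- `curv g x i j k l` is the `l`-th component of `R(∂ᵢ,∂ⱼ)∂ₖ` at `x`
(convention `R(X,Y) = [∇_X,∇_Y] − ∇_{[X,Y]}`). -/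
noncomputable def curv {n : ℕ} (g : (Fin n → ℝ) → Matrix (Fin n) (Fin n) ℝ)
    (x : Fin n → ℝ) (i j k l : Fin n) : ℝ :=
  pd i (fun y => christoffel g y l j k) x - pd j (fun y => christoffel g y l i k) x
    + ∑ m, (christoffel g x l i m * christoffel g x m j k
        - christoffel g x l j m * christoffel g x m i k)

/-- The Siklos metric with parameter `β` and defining function `H = H(x₂,x₃,x₄)`;
indices `0,1,2,3` correspond to the coordinates `x₁,x₂,x₃,x₄`. -/
noncomputable def siklos (β : ℝ) (H : ℝ → ℝ → ℝ → ℝ) (x : Fin 4 → ℝ) :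
    Matrix (Fin 4) (Fin 4) ℝ :=
  Matrix.of fun i j =>
    if (i = 0 ∧ j = 1) ∨ (i = 1 ∧ j = 0) ∨ (i = 2 ∧ j = 2) ∨ (i = 3 ∧ j = 3) then
      β ^ 2 / x 2 ^ 2
    else if i = 1 ∧ j = 1 then β ^ 2 / x 2 ^ 2 * H (x 1) (x 2) (x 3)
    else 0

/-- `H'₂`. -/
noncomputable def H2 (H : ℝ → ℝ → ℝ → ℝ) (a b c : ℝ) : ℝ := deriv (fun t => H t b c) a
/-- `H'₃`. -/
noncomputable def H3 (H : ℝ → ℝ → ℝ → ℝ) (a b c : ℝ) : ℝ := deriv (fun t => H a t c) b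
/-- `H'₄`. -/
noncomputable def H4 (H : ℝ → ℝ → ℝ → ℝ) (a b c : ℝ) : ℝ := deriv (fun t => H a b t) c
/-- `H''₂₃`. -/
noncomputable def H23 (H : ℝ → ℝ → ℝ → ℝ) (a b c : ℝ) : ℝ := deriv (fun t => H3 H t b c) a
/-- `H''₃₃`. -/
noncomputable def H33 (H : ℝ → ℝ → ℝ → ℝ) (a b c : ℝ) : ℝ := deriv (fun t => H3 H a t c) b
/-- `H''₃₄`. -/
noncomputable def H34 (H : ℝ → ℝ → ℝ → ℝ) (a b c : ℝ) : ℝ := deriv (fun t => H4 H a t c) b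
/-- `H''₄₄`. -/
noncomputable def H44 (H : ℝ → ℝ → ℝ → ℝ) (a b c : ℝ) : ℝ := deriv (fun t => H4 H a b t) c

/-- Ricci tensor `Ricⱼₖ = Σᵢ (R(∂ᵢ,∂ⱼ)∂ₖ)ⁱ` of the Siklos metric. -/
noncomputable def ricci (β : ℝ) (H : ℝ → ℝ → ℝ → ℝ) (x : Fin 4 → ℝ) (j k : Fin 4) : ℝ :=
  ∑ i, curv (siklos β H) x i j k i

/-- Scalar curvature of the Siklos metric. -/
noncomputable def scal (β : ℝ) (H : ℝ → ℝ → ℝ → ℝ) (x : Fin 4 → ℝ) : ℝ :=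
  ∑ j, ∑ k, (siklos β H x)⁻¹ j k * ricci β H x j k

/-- `g(X,Y) = Σᵢⱼ gᵢⱼ Xⁱ Yʲ`. -/
noncomputable def gApply (M : Matrix (Fin 4) (Fin 4) ℝ) (X Y : Fin 4 → ℝ) : ℝ :=
  ∑ i, ∑ j, M i j * X i * Y j

/-- Curvature applied to arbitrary vectors: `R(X,Y)Z = Σᵢⱼₖ XⁱYʲZᵏ R(∂ᵢ,∂ⱼ)∂ₖ`. -/
noncomputable def Rmulti (β : ℝ) (H : ℝ → ℝ → ℝ → ℝ) (x : Fin 4 → ℝ)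
    (X Y Z : Fin 4 → ℝ) (l : Fin 4) : ℝ :=
  ∑ i, ∑ j, ∑ k, X i * Y j * Z k * curv (siklos β H) x i j k l

/-- `Rₐᵦ𝒸𝒹 = g(R(∂ₐ,∂ᵦ)∂𝒹, ∂𝒸)`. -/
noncomputable def Rlow (β : ℝ) (H : ℝ → ℝ → ℝ → ℝ) (x : Fin 4 → ℝ) (a b c d : Fin 4) : ℝ :=
  ∑ l, siklos β H x l c * curv (siklos β H) x a b d l

/-- The Weyl tensor (in dimension 4) of the Siklos metric. -/
noncomputable def weyl (β : ℝ) (H : ℝ → ℝ → ℝ → ℝ) (x : Fin 4 → ℝ) (a b c d : Fin 4) : ℝ :=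
  Rlow β H x a b c d
    - (1 / 2) * (siklos β H x a c * ricci β H x b d - siklos β H x a d * ricci β H x b c
        + siklos β H x b d * ricci β H x a c - siklos β H x b c * ricci β H x a d)
    + scal β H x / 6 *
        (siklos β H x a c * siklos β H x b d - siklos β H x a d * siklos β H x b c)

/-- Coordinate tangent vector `F_{uᵢ}` of an immersion `F : ℝ³ → ℝ⁴`. -/
noncomputable def Fu (F : (Fin 3 → ℝ) → Fin 4 → ℝ) (i : Fin 3) (u : Fin 3 → ℝ) :
    Fin 4 → ℝ := fun k => pd i (fun v => F v k) u

/-- Ambient covariant derivative `DᵢF_{uⱼ}` along `F`, for the Siklos metric. -/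
noncomputable def ambD (β : ℝ) (H : ℝ → ℝ → ℝ → ℝ) (F : (Fin 3 → ℝ) → Fin 4 → ℝ)
    (i j : Fin 3) (u : Fin 3 → ℝ) : Fin 4 → ℝ :=
  fun k => pd i (fun v => Fu F j v k) u
    + ∑ l, ∑ m, christoffel (siklos β H) (F u) k l m * Fu F i u l * Fu F j u m

/-- Second fundamental form `hᵢⱼ = g(DᵢF_{uⱼ}, ξ)` of `F` with unit normal `ξ`. -/
noncomputable def sff (β : ℝ) (H : ℝ → ℝ → ℝ → ℝ) (F ξ : (Fin 3 → ℝ) → Fin 4 → ℝ)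
    (i j : Fin 3) (u : Fin 3 → ℝ) : ℝ :=
  gApply (siklos β H (F u)) (ambD β H F i j u) (ξ u)

/-- Induced metric `ĝᵢⱼ = g(F_{uᵢ}, F_{uⱼ})` of the hypersurface. -/
noncomputable def inducedMetric (β : ℝ) (H : ℝ → ℝ → ℝ → ℝ) (F : (Fin 3 → ℝ) → Fin 4 → ℝ)
    (u : Fin 3 → ℝ) : Matrix (Fin 3) (Fin 3) ℝ :=
  Matrix.of fun i j => gApply (siklos β H (F u)) (Fu F i u) (Fu F j u)

/-- Covariant derivative of the second fundamental form,
`(∇h)ₖᵢⱼ = ∂ₖhᵢⱼ − Σₗ Γ̂ˡₖᵢ hₗⱼ − Σₗ Γ̂ˡₖⱼ hᵢₗ`. -/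
noncomputable def nablah (β : ℝ) (H : ℝ → ℝ → ℝ → ℝ) (F ξ : (Fin 3 → ℝ) → Fin 4 → ℝ)
    (k i j : Fin 3) (u : Fin 3 → ℝ) : ℝ :=
  pd k (fun v => sff β H F ξ i j v) u
    - ∑ l, christoffel (inducedMetric β H F) u l k i * sff β H F ξ l j u
    - ∑ l, christoffel (inducedMetric β H F) u l k j * sff β H F ξ i l u

/-- Mean curvature `(1/3) Σᵢⱼ ĝⁱʲ hᵢⱼ` of the hypersurface. -/
noncomputable def meanCurv (β : ℝ) (H : ℝ → ℝ → ℝ → ℝ) (F ξ : (Fin 3 → ℝ) → Fin 4 → ℝ)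
    (u : Fin 3 → ℝ) : ℝ :=
  (1 / 3) * ∑ i, ∑ j, (inducedMetric β H F u)⁻¹ i j * sff β H F ξ i j u

/-- for `H(x₂,x₃,x₄) = x₃²` (`ε = 1`, `k = 1`), the immersion
`F(u) = (u₁, u₃, ρe^{−u₃}, −u₂e^{−u₃})` is parallel and not totally geodesic. -/

lemma d_cexp_neg (c x : ℝ) : deriv (fun t => c * Real.exp (-t)) x = -(c * Real.exp (-x)) := by
  have h : HasDerivAt (fun t : ℝ => Real.exp (-t)) (Real.exp (-x) * (-1)) x :=
    (Real.hasDerivAt_exp (-x)).comp x ((hasDerivAt_id x).neg)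
  rw [(h.const_mul c).deriv]; ring

lemma d_neg_exp (x : ℝ) : deriv (fun t : ℝ => -Real.exp (-t)) x = Real.exp (-x) := by
  have h : HasDerivAt (fun t : ℝ => Real.exp (-t)) (Real.exp (-x) * (-1)) x :=
    (Real.hasDerivAt_exp (-x)).comp x ((hasDerivAt_id x).neg)
  rw [HasDerivAt.deriv (f := fun t : ℝ => -Real.exp (-t)) h.neg]; ring

lemma d_neg_cexp (c x : ℝ) : deriv (fun t => -(c * Real.exp (-t))) x = c * Real.exp (-x) := by
  have h : HasDerivAt (fun t : ℝ => Real.exp (-t)) (Real.exp (-x) * (-1)) x :=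
    (Real.hasDerivAt_exp (-x)).comp x ((hasDerivAt_id x).neg)
  rw [HasDerivAt.deriv (f := fun t : ℝ => -(c * Real.exp (-t))) (h.const_mul c).neg]; ring

lemma d_cexp2 (c x : ℝ) : deriv (fun t => c * Real.exp (2 * t)) x = 2 * c * Real.exp (2 * x) := by
  have h : HasDerivAt (fun t : ℝ => Real.exp (2 * t)) (Real.exp (2 * x) * 2) x :=
    (Real.hasDerivAt_exp (2 * x)).comp x (by simpa using (hasDerivAt_id x).const_mul (2:ℝ))
  rw [(h.const_mul c).deriv]; ring

lemma d_mulc (c x : ℝ) : deriv (fun t => t * c) x = c := by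
  have h : HasDerivAt (fun t : ℝ => t * c) (1 * c) x := (hasDerivAt_id x).mul_const c
  rw [h.deriv]; ring

lemma d_negmulc (c x : ℝ) : deriv (fun t => -t * c) x = -c := by
  have h : HasDerivAt (fun t : ℝ => -t * c) (-1 * c) x := ((hasDerivAt_id x).neg).mul_const c
  rw [h.deriv]; ring

lemma d_cmul (c x : ℝ) : deriv (fun t => c * t) x = c := by
  have h : HasDerivAt (fun t : ℝ => c * t) (c * 1) x := (hasDerivAt_id x).const_mul c
  rw [h.deriv]; ring

lemma d_neg_cmul (c x : ℝ) : deriv (fun t => -(c * t)) x = -c := by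
  have h : HasDerivAt (fun t : ℝ => -(c * t)) (-(c * 1)) x := ((hasDerivAt_id x).const_mul c).neg
  rw [h.deriv]; ring

lemma d_add_csq (a c x : ℝ) : deriv (fun t => a + c * t ^ 2) x = 2 * c * x := by
  have h : HasDerivAt (fun t : ℝ => a + c * t ^ 2) (0 + c * (2 * x ^ 1)) x :=
    (hasDerivAt_const x a).add ((hasDerivAt_pow 2 x).const_mul c)
  rw [h.deriv]; ring

lemma d_cdivsq (c x : ℝ) (hx : x ≠ 0) : deriv (fun t => c / t ^ 2) x = -2 * c / x ^ 3 := by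
  have h : HasDerivAt (fun t : ℝ => c * (t ^ 2)⁻¹) (c * (-(2 * x ^ 1) / (x ^ 2) ^ 2)) x :=
    ((hasDerivAt_pow 2 x).inv (pow_ne_zero 2 hx)).const_mul c
  have e : (fun t : ℝ => c / t ^ 2) = fun t : ℝ => c * (t ^ 2)⁻¹ := by
    funext t; rw [div_eq_mul_inv]
  rw [e, h.deriv]; field_simp

lemma d_g11 (c x : ℝ) (hx : x ≠ 0) : deriv (fun t => c / t ^ 2 * t ^ 2) x = 0 := by
  have e : (fun t : ℝ => c / t ^ 2 * t ^ 2) =ᶠ[nhds x] fun _ => c := by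
    filter_upwards [isOpen_ne.mem_nhds hx] with t ht
    field_simp
  rw [e.deriv_eq]; simp

noncomputable section
namespace S17

def Hc : ℝ → ℝ → ℝ → ℝ := fun _ b _ => b ^ 2

noncomputable def Fc (ρ : ℝ) : (Fin 3 → ℝ) → Fin 4 → ℝ :=
  fun u => ![u 0, u 2, ρ * Real.exp (-u 2), -u 1 * Real.exp (-u 2)]

noncomputable def ξc (β ρ : ℝ) : (Fin 3 → ℝ) → Fin 4 → ℝ :=
  fun u => ![ρ ^ 2 * Real.exp (-(2 * u 2)) / β, 0, ρ * Real.exp (-u 2) / β, 0]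

noncomputable def Ginv (β s : ℝ) : Matrix (Fin 4) (Fin 4) ℝ :=
  !![-(s^4/β^2), s^2/β^2, 0, 0; s^2/β^2, 0, 0, 0; 0, 0, s^2/β^2, 0; 0, 0, 0, s^2/β^2]

lemma inv_siklos (β : ℝ) (hβ : β ≠ 0) (x : Fin 4 → ℝ) (hx : x 2 ≠ 0) :
    (siklos β Hc x)⁻¹ = Ginv β (x 2) := by
  apply Matrix.inv_eq_right_inv
  ext i j
  fin_cases i <;> fin_cases j <;>
    simp [Matrix.mul_apply, Fin.sum_univ_four, siklos, Ginv, Hc, Matrix.one_apply,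
      Matrix.vecHead, Matrix.vecTail] <;>
    (try field_simp) <;> ring

lemma pd_siklos (β : ℝ) (x : Fin 4 → ℝ) (hx : x 2 ≠ 0) (i l j : Fin 4) :
    pd i (fun y => siklos β Hc y l j) x =
      if i = 2 ∧ ((l=0∧j=1)∨(l=1∧j=0)∨(l=2∧j=2)∨(l=3∧j=3)) then -2*β^2/(x 2)^3 else 0 := by
  fin_cases i <;> fin_cases l <;> fin_cases j <;>
    simp [pd, siklos, Hc, Function.update_apply, d_cdivsq, d_g11, hx] <;>
    (try field_simp) <;> ring

noncomputable def Gam (s : ℝ) : Fin 4 → Fin 4 → Fin 4 → ℝ :=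
  ![![![0,0,-(1/s),0], ![0,0,s,0], ![-(1/s),s,0,0], ![0,0,0,0]],
    ![![0,0,0,0], ![0,0,-(1/s),0], ![0,-(1/s),0,0], ![0,0,0,0]],
    ![![0,1/s,0,0], ![1/s,0,0,0], ![0,0,-(1/s),0], ![0,0,0,1/s]],
    ![![0,0,0,0], ![0,0,0,0], ![0,0,0,-(1/s)], ![0,0,-(1/s),0]]]

lemma chr_siklos (β : ℝ) (hβ : β ≠ 0) (x : Fin 4 → ℝ) (hx : x 2 ≠ 0) (k i j : Fin 4) :
    christoffel (siklos β Hc) x k i j = Gam (x 2) k i j := by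
  unfold christoffel
  rw [inv_siklos β hβ x hx]
  fin_cases k <;> fin_cases i <;> fin_cases j <;>
    simp [Fin.sum_univ_four, pd_siklos β x hx, Ginv, Gam, Matrix.vecHead, Matrix.vecTail] <;>
    (try field_simp) <;> ring

noncomputable def FuVal (ρ : ℝ) : Fin 3 → (Fin 3 → ℝ) → Fin 4 → ℝ := fun j v =>
  ![![1,0,0,0], ![0,0,0,-Real.exp (-v 2)],
    ![0,1,-(ρ*Real.exp (-v 2)), v 1 * Real.exp (-v 2)]] j

lemma Fu_eq (ρ : ℝ) (j : Fin 3) : Fu (Fc ρ) j = FuVal ρ j := by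
  funext v k
  fin_cases j <;> fin_cases k <;>
    simp [Fu, pd, Fc, FuVal, Function.update_apply, d_cexp_neg, d_neg_cexp, d_negmulc,
      d_neg_exp, d_mulc, d_cmul, Matrix.vecHead, Matrix.vecTail]

noncomputable def Dval (ρ : ℝ) : Fin 3 → Fin 3 → (Fin 3 → ℝ) → Fin 4 → ℝ := fun i j u =>
  ![![![0,0,0,0], ![0,0,0,0], ![1,0,Real.exp (u 2)/ρ,0]],
    ![![0,0,0,0], ![0,0,Real.exp (-u 2)/ρ,0], ![0,0,-(u 1*Real.exp (-u 2)/ρ),0]],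
    ![![1,0,Real.exp (u 2)/ρ,0], ![0,0,-(u 1*Real.exp (-u 2)/ρ),0],
      ![-(2*ρ^2*Real.exp (-u 2)^2), 2, u 1^2*Real.exp (-u 2)/ρ, u 1*Real.exp (-u 2)]]] i j

lemma Fc2_ne (ρ : ℝ) (hρ : ρ ≠ 0) (u : Fin 3 → ℝ) : (Fc ρ u) 2 ≠ 0 := by
  simp [Fc]
  exact fun h => absurd h hρ

set_option maxHeartbeats 2000000 in
lemma ambD_eq (β ρ : ℝ) (hβ : β ≠ 0) (hρ : ρ ≠ 0) (i j : Fin 3) (u : Fin 3 → ℝ) :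
    ambD β Hc (Fc ρ) i j u = Dval ρ i j u := by
  have hx := Fc2_ne ρ hρ u
  funext k
  unfold ambD
  simp only [Fu_eq ρ, chr_siklos β hβ (Fc ρ u) hx]
  fin_cases i <;> fin_cases j <;> fin_cases k <;>
    simp [Fin.sum_univ_four, FuVal, Dval, Gam, Fc, pd, Function.update_apply,
      d_cexp_neg, d_neg_cexp, d_negmulc, d_neg_exp, d_mulc, d_cmul,
      Matrix.vecHead, Matrix.vecTail, Real.exp_ne_zero] <;>
    (try field_simp) <;> (try ring) <;> (try rw [← Real.exp_add]) <;> norm_num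

lemma d_hmul (c x : ℝ) : deriv (HMul.hMul c) x = c := by
  have h : HasDerivAt (fun t : ℝ => c * t) (c * 1) x := (hasDerivAt_id x).const_mul c
  rw [show HMul.hMul c = fun t : ℝ => c * t from rfl, h.deriv]; ring

lemma exp_two_mul' (a : ℝ) : Real.exp (2*a) = Real.exp a ^ 2 := by
  rw [two_mul, Real.exp_add, sq]

lemma exp_four_mul' (a : ℝ) : Real.exp (4*a) = Real.exp a ^ 4 := by
  rw [show (4:ℝ)*a = a+a+a+a by ring, Real.exp_add, Real.exp_add, Real.exp_add]; ring

noncomputable def Ghat (β ρ : ℝ) : (Fin 3 → ℝ) → Matrix (Fin 3) (Fin 3) ℝ := fun u =>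
  !![0, 0, β^2/ρ^2 * Real.exp (2*u 2);
     0, β^2/ρ^2, -(β^2/ρ^2 * u 1);
     β^2/ρ^2 * Real.exp (2*u 2), -(β^2/ρ^2 * u 1), 2*β^2 + β^2/ρ^2 * u 1^2]

lemma gind (β ρ : ℝ) (hβ : β ≠ 0) (hρ : ρ ≠ 0) :
    inducedMetric β Hc (Fc ρ) = Ghat β ρ := by
  funext u
  ext i j
  fin_cases i <;> fin_cases j <;>
    simp [inducedMetric, gApply, Fin.sum_univ_four, siklos, Hc, Fu_eq, FuVal, Fc, Ghat,
      Matrix.vecHead, Matrix.vecTail] <;>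
    (try simp [Real.exp_neg, exp_two_mul', exp_four_mul']) <;>
    (try field_simp) <;> (try ring) <;> simp

noncomputable def GhatInv (β ρ : ℝ) (u : Fin 3 → ℝ) : Matrix (Fin 3) (Fin 3) ℝ :=
  !![-(2*ρ^4*Real.exp (-(4*u 2))/β^2), ρ^2*u 1*Real.exp (-(2*u 2))/β^2, ρ^2*Real.exp (-(2*u 2))/β^2;
     ρ^2*u 1*Real.exp (-(2*u 2))/β^2, ρ^2/β^2, 0;
     ρ^2*Real.exp (-(2*u 2))/β^2, 0, 0]

lemma inv_ghat (β ρ : ℝ) (hβ : β ≠ 0) (hρ : ρ ≠ 0) (u : Fin 3 → ℝ) :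
    (Ghat β ρ u)⁻¹ = GhatInv β ρ u := by
  apply Matrix.inv_eq_right_inv
  ext i j
  fin_cases i <;> fin_cases j <;>
    simp [Matrix.mul_apply, Fin.sum_univ_three, Ghat, GhatInv, Matrix.one_apply,
      Matrix.vecHead, Matrix.vecTail] <;>
    (try simp [Real.exp_neg, exp_two_mul', exp_four_mul']) <;>
    (try field_simp) <;> (try ring) <;> simp

noncomputable def GamHat (ρ : ℝ) : (Fin 3 → ℝ) → Fin 3 → Fin 3 → Fin 3 → ℝ := fun u =>
  ![![![0,0,0],
     ![0, -Real.exp (-(2*u 2)), u 1*Real.exp (-(2*u 2))],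
     ![0, u 1*Real.exp (-(2*u 2)), -((4*ρ^2+u 1^2)*Real.exp (-(2*u 2)))]],
    ![![0,0,0], ![0,0,0], ![0,0,u 1]],
    ![![0,0,0], ![0,0,0], ![0,0,2]]]

set_option maxHeartbeats 2000000 in
lemma chrHat (β ρ : ℝ) (hβ : β ≠ 0) (hρ : ρ ≠ 0) (u : Fin 3 → ℝ) (k i j : Fin 3) :
    christoffel (inducedMetric β Hc (Fc ρ)) u k i j = GamHat ρ u k i j := by
  unfold christoffel
  rw [gind β ρ hβ hρ, inv_ghat β ρ hβ hρ u]
  fin_cases k <;> fin_cases i <;> fin_cases j <;>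
    simp [Fin.sum_univ_three, GhatInv, GamHat, Ghat, pd, Function.update_apply,
      d_cexp2, d_neg_cmul, d_add_csq, d_hmul, Matrix.vecHead, Matrix.vecTail] <;>
    (try simp [Real.exp_neg, exp_two_mul', exp_four_mul', d_hmul]) <;>
    (try field_simp) <;> (try ring) <;> simp

noncomputable def hval (β ρ : ℝ) : Fin 3 → Fin 3 → (Fin 3 → ℝ) → ℝ := fun i j u =>
  ![![0, 0, β/ρ^2*Real.exp (2*u 2)],
    ![0, β/ρ^2, -(β/ρ^2*u 1)],
    ![β/ρ^2*Real.exp (2*u 2), -(β/ρ^2*u 1), 2*β + β/ρ^2*u 1^2]] i j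

set_option maxHeartbeats 2000000 in
lemma sff_eq (β ρ : ℝ) (hβ : β ≠ 0) (hρ : ρ ≠ 0) (i j : Fin 3) :
    sff β Hc (Fc ρ) (ξc β ρ) i j = hval β ρ i j := by
  funext u
  unfold sff
  rw [ambD_eq β ρ hβ hρ i j u]
  fin_cases i <;> fin_cases j <;>
    simp [gApply, Fin.sum_univ_four, siklos, Hc, Fc, ξc, Dval, hval,
      Matrix.vecHead, Matrix.vecTail] <;>
    (try simp [Real.exp_neg, exp_two_mul', exp_four_mul']) <;>
    (try field_simp) <;> (try ring) <;> simp

set_option maxHeartbeats 2000000 in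
lemma nablah_zero (β ρ : ℝ) (hβ : β ≠ 0) (hρ : ρ ≠ 0) (u : Fin 3 → ℝ) (k i j : Fin 3) :
    nablah β Hc (Fc ρ) (ξc β ρ) k i j u = 0 := by
  unfold nablah
  simp only [sff_eq β ρ hβ hρ, chrHat β ρ hβ hρ]
  fin_cases k <;> fin_cases i <;> fin_cases j <;>
    simp [Fin.sum_univ_three, hval, GamHat, pd, Function.update_apply,
      d_cexp2, d_neg_cmul, d_add_csq, d_hmul, Matrix.vecHead, Matrix.vecTail] <;>
    (try simp [Real.exp_neg, exp_two_mul', exp_four_mul', d_hmul]) <;>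
    (try field_simp) <;> (try ring) <;> simp

lemma unit_normal (β ρ : ℝ) (hβ : β ≠ 0) (hρ : ρ ≠ 0) (u : Fin 3 → ℝ) :
    gApply (siklos β Hc (Fc ρ u)) (ξc β ρ u) (ξc β ρ u) = 1 := by
  simp [gApply, Fin.sum_univ_four, siklos, Hc, Fc, ξc, Matrix.vecHead, Matrix.vecTail]
  simp [Real.exp_neg, exp_two_mul', exp_four_mul']
  field_simp

lemma orth_normal (β ρ : ℝ) (hβ : β ≠ 0) (hρ : ρ ≠ 0) (u : Fin 3 → ℝ) (i : Fin 3) :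
    gApply (siklos β Hc (Fc ρ u)) (ξc β ρ u) (Fu (Fc ρ) i u) = 0 := by
  rw [Fu_eq ρ i]
  fin_cases i <;>
    simp [gApply, Fin.sum_univ_four, siklos, Hc, Fc, ξc, FuVal,
      Matrix.vecHead, Matrix.vecTail] <;>
    (try simp [Real.exp_neg, exp_two_mul', exp_four_mul']) <;>
    (try field_simp) <;> (try ring) <;> simp

end S17

theorem stmt_17 (β : ℝ) (hβ : 0 < β)
    (H : ℝ → ℝ → ℝ → ℝ) (hH : H = fun _ b _ => b ^ 2)
    (ρ : ℝ) (hρ : 0 < ρ)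
    (F ξ : (Fin 3 → ℝ) → Fin 4 → ℝ)
    (hF : F = fun u => ![u 0, u 2, ρ * Real.exp (-u 2), -u 1 * Real.exp (-u 2)])
    (hξ : ξ = fun u => ![ρ ^ 2 * Real.exp (-(2 * u 2)) / β, 0,
      ρ * Real.exp (-u 2) / β, 0]) :
    (∀ u : Fin 3 → ℝ,
      gApply (siklos β H (F u)) (ξ u) (ξ u) = 1 ∧
      ∀ i : Fin 3, gApply (siklos β H (F u)) (ξ u) (Fu F i u) = 0) ∧
    (∀ u : Fin 3 → ℝ, ∀ k i j : Fin 3, nablah β H F ξ k i j u = 0) ∧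
    ¬(∀ u : Fin 3 → ℝ, ∀ i j : Fin 3, sff β H F ξ i j u = 0) := by
  have hH' : H = S17.Hc := hH
  have hF' : F = S17.Fc ρ := hF
  have hξ' : ξ = S17.ξc β ρ := hξ
  subst hH' hF' hξ'
  have hβ' : β ≠ 0 := ne_of_gt hβ
  have hρ' : ρ ≠ 0 := ne_of_gt hρ
  refine ⟨fun u => ⟨S17.unit_normal β ρ hβ' hρ' u, fun i => S17.orth_normal β ρ hβ' hρ' u i⟩,
    fun u k i j => S17.nablah_zero β ρ hβ' hρ' u k i j, ?_⟩
  intro hcon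
  have h11 := hcon (fun _ => 0) 1 1
  rw [show sff β S17.Hc (S17.Fc ρ) (S17.ξc β ρ) 1 1 (fun _ => 0) = β / ρ ^ 2 from by
    rw [S17.sff_eq β ρ hβ' hρ' 1 1]; simp [S17.hval]] at h11
  exact absurd h11 (div_ne_zero hβ' (pow_ne_zero 2 hρ'))
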